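/- Let φ : ℂ → ℂ be an additive function that is not identically zero and satisfies: |φ(λ)| = |φ(μ)| whenever |λ| = |μ|, and |φ(μ)| ≤ |φ(λ)| whenever |μ| < |λ|. Then either φ(λ) = φ(1)·λ for all λ ∈ ℂ, or φ(λ) = φ(1)·conj(λ) for all λ ∈ ℂ. -/

import Mathlib

theorem stmt18 (φ : ℂ → ℂ) (hadd : ∀ x y : ℂ, φ (x + y) = φ x + φ y) (hne : φ ≠ 0)
    (h1 : ∀ z w : ℂ, ‖z‖ = ‖w‖ → ‖φ z‖ = ‖φ w‖)
    (h2 : ∀ z w : ℂ, ‖w‖ < ‖z‖ → ‖φ w‖ ≤ ‖φ z‖) :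
    (∀ z : ℂ, φ z = φ 1 * z) ∨ (∀ z : ℂ, φ z = φ 1 * (starRingEnd ℂ) z) := by
  set f : ℂ →+ ℂ := AddMonoidHom.mk' φ hadd with hf
  have h0 : φ 0 = 0 := map_zero f
  set a := φ 1 with ha
  have hrat : ∀ (q : ℚ) (z : ℂ), φ ((q : ℂ) * z) = (q : ℂ) * φ z := by
    intro q z
    have := map_ratCast_smul f ℂ ℂ q z
    simp only [smul_eq_mul] at this
    exact this
  have habsq : ∀ q : ℚ, ‖(q : ℂ)‖ = |(q : ℝ)| := by
    intro q
    rw [Complex.norm_ratCast]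
  -- φ(1) ≠ 0
  have haz : a ≠ 0 := by
    intro h
    apply hne
    funext z
    simp only [Pi.zero_apply]
    obtain ⟨n, hn⟩ := exists_nat_gt (‖z‖)
    set q : ℚ := (n : ℚ) + 1 with hq
    have hq0 : (0:ℝ) < (q : ℝ) := by positivity
    have hzq : ‖z‖ < (q : ℝ) := by rw [hq]; push_cast; linarith
    have hlt : ‖(q : ℂ)⁻¹ * z‖ < 1 := by
      rw [norm_mul, norm_inv, habsq, abs_of_pos hq0]
      have h' := mul_lt_mul_of_pos_left hzq (inv_pos.mpr hq0)
      rwa [inv_mul_cancel₀ hq0.ne'] at h'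
    have hz0 : φ ((q : ℂ)⁻¹ * z) = 0 := by
      have := h2 1 ((q : ℂ)⁻¹ * z) (by simpa using hlt)
      rw [← ha, h] at this
      simpa using (norm_eq_zero.mp (le_antisymm (by simpa using this) (norm_nonneg _)))
    have : φ z = (q : ℂ) * φ ((q : ℂ)⁻¹ * z) := by
      rw [← hrat, mul_inv_cancel_left₀]
      exact_mod_cast (by positivity : (0:ℚ) < q).ne'
    rw [this, hz0, mul_zero]
  have hA : 0 < ‖a‖ := norm_pos_iff.mpr haz
  have hkey : ∀ q : ℚ, 0 ≤ q → ‖φ (q : ℂ)‖ = (q : ℝ) * ‖a‖ := by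
    intro q hq0
    have : φ ((q : ℂ)) = (q : ℂ) * a := by
      simpa using hrat q 1
    rw [this, norm_mul, habsq, abs_of_nonneg (by exact_mod_cast hq0)]
  have habs : ∀ z : ℂ, ‖φ z‖ = ‖z‖ * ‖a‖ := by
    intro z
    refine le_antisymm ?_ ?_
    · by_contra hc
      push_neg at hc
      have hd : ‖z‖ < ‖φ z‖ / ‖a‖ := by
        rwa [lt_div_iff₀ hA]
      obtain ⟨q, hq1, hq2⟩ := exists_rat_btwn hd
      have hq0 : (0:ℝ) ≤ (q:ℝ) := le_trans (norm_nonneg z) hq1.le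
      have := h2 (q : ℂ) z (by rwa [habsq, abs_of_nonneg hq0])
      rw [hkey q (by exact_mod_cast hq0)] at this
      have : ‖φ z‖ < ‖φ z‖ :=
        lt_of_le_of_lt this (by rwa [← lt_div_iff₀ hA])
      exact lt_irrefl _ this
    · rcases eq_or_ne z 0 with rfl | hz
      · simp [h0]
      · have hz0 : 0 < ‖z‖ := norm_pos_iff.mpr hz
        by_contra hc
        push_neg at hc
        have hd : ‖φ z‖ / ‖a‖ < ‖z‖ := by
          rwa [div_lt_iff₀ hA]
        obtain ⟨q, hq1, hq2⟩ := exists_rat_btwn hd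
        have hq0 : (0:ℝ) ≤ (q:ℝ) := le_trans (by positivity) hq1.le
        have := h2 z (q : ℂ) (by rwa [habsq, abs_of_nonneg hq0])
        rw [hkey q (by exact_mod_cast hq0)] at this
        have : ‖φ z‖ < ‖φ z‖ :=
          lt_of_lt_of_le (by rwa [div_lt_iff₀ hA] at hq1) this
        exact lt_irrefl _ this
  have hns : ∀ z : ℂ, Complex.normSq (φ z) = Complex.normSq z * Complex.normSq a := by
    intro z
    rw [← Complex.sq_norm, ← Complex.sq_norm z, ← Complex.sq_norm a, habs, mul_pow]
  have hhom : ∀ (x : ℝ) (w : ℂ), ‖w‖ = 1 → φ ((x : ℂ) * w) = (x : ℂ) * φ w := by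
    intro x w hw
    set u := φ ((x : ℂ) * w) with hu
    set v := φ w with hv
    have hnu : Complex.normSq u = x ^ 2 * Complex.normSq a := by
      rw [hu, hns, Complex.normSq_mul, Complex.normSq_ofReal, ← Complex.sq_norm w, hw]
      ring
    have hnv : Complex.normSq v = Complex.normSq a := by
      rw [hv, hns, ← Complex.sq_norm w, hw]
      ring
    have hsum : Complex.normSq (u + v) = (x + 1) ^ 2 * Complex.normSq a := by
      have e1 : u + v = φ (((x + 1 : ℝ) : ℂ) * w) := by
        rw [hu, hv, ← hadd]
        push_cast
        ring_nf
      rw [e1, hns, Complex.normSq_mul, Complex.normSq_ofReal, ← Complex.sq_norm w, hw]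
      ring
    have hre : (u * (starRingEnd ℂ) v).re = x * Complex.normSq a := by
      have := Complex.normSq_add u v
      rw [hsum, hnu, hnv] at this
      nlinarith [this]
    have hzero : Complex.normSq (u - (x : ℂ) * v) = 0 := by
      rw [Complex.normSq_sub, Complex.normSq_mul, Complex.normSq_ofReal]
      have e2 : (u * (starRingEnd ℂ) ((x : ℂ) * v)).re = x * (u * (starRingEnd ℂ) v).re := by
        rw [map_mul, Complex.conj_ofReal,
          show u * ((x:ℂ) * (starRingEnd ℂ) v) = (x:ℂ) * (u * (starRingEnd ℂ) v) by ring,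
          Complex.re_ofReal_mul]
      rw [e2, hre, hnu, hnv]
      ring
    exact sub_eq_zero.mp (Complex.normSq_eq_zero.mp hzero)
  set b := φ Complex.I with hb
  have hdecomp : ∀ z : ℂ, φ z = (z.re : ℂ) * a + (z.im : ℂ) * b := by
    intro z
    have e1 : φ ((z.re : ℂ)) = (z.re : ℂ) * a := by
      simpa using hhom z.re 1 (by simp)
    have e2 : φ ((z.im : ℂ) * Complex.I) = (z.im : ℂ) * b := by
      simpa using hhom z.im Complex.I (by simp)
    calc φ z = φ ((z.re : ℂ) + (z.im : ℂ) * Complex.I) := by rw [Complex.re_add_im]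
      _ = _ := by rw [hadd, e1, e2]
  have hnb : Complex.normSq b = Complex.normSq a := by
    rw [hb, hns]
    simp
  have hreab : (a * (starRingEnd ℂ) b).re = 0 := by
    have h1I : Complex.normSq (a + b) = 2 * Complex.normSq a := by
      have e : a + b = φ (1 + Complex.I) := by rw [hadd, ← ha, ← hb]
      rw [e, hns]
      norm_num [Complex.normSq_apply]
    have := Complex.normSq_add a b
    rw [h1I, hnb] at this
    nlinarith [this]
  set A := Complex.normSq a with hAdef
  have hAne : (A : ℂ) ≠ 0 := by
    exact_mod_cast Complex.ofReal_ne_zero.mpr (ne_of_gt (Complex.normSq_pos.mpr haz))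
  set c := b * (starRingEnd ℂ) a with hc
  have hcb : c = b * (starRingEnd ℂ) a := hc
  have hcre : c.re = 0 := by
    have e : c = (starRingEnd ℂ) (a * (starRingEnd ℂ) b) := by
      rw [hc, map_mul, Complex.conj_conj]; ring
    rw [e, Complex.conj_re, hreab]
  have hcns : Complex.normSq c = A * A := by
    rw [hc, Complex.normSq_mul, Complex.normSq_conj, hnb]
  have hmul : b * (A : ℂ) = c * a := by
    rw [hAdef, hc, Complex.normSq_eq_conj_mul_self]
    ring
  clear_value f a b c A
  clear hf hc hAdef
  have hcim : c.im = A ∨ c.im = -A := by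
    have hns' := Complex.normSq_apply c
    rw [hcre, hcns] at hns'
    have h' : (c.im - A) * (c.im + A) = 0 := by nlinarith [hns']
    rcases mul_eq_zero.mp h' with h | h
    · exact Or.inl (by linarith)
    · exact Or.inr (by linarith)
  have hcases : b = Complex.I * a ∨ b = -(Complex.I * a) := by
    rcases hcim with h | h
    · left
      have hcval : c = Complex.I * (A : ℂ) := by
        apply Complex.ext <;> simp [hcre, h]
      have : b * (A : ℂ) = (Complex.I * a) * (A : ℂ) := by
        rw [hmul, hcval]; ring
      exact mul_right_cancel₀ hAne this
    · right
      have hcval : c = -(Complex.I * (A : ℂ)) := by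
        apply Complex.ext <;> simp [hcre, h]
      have : b * (A : ℂ) = (-(Complex.I * a)) * (A : ℂ) := by
        rw [hmul, hcval]; ring
      exact mul_right_cancel₀ hAne this
  rcases hcases with h | h
  · left
    intro z
    calc φ z = (z.re : ℂ) * a + (z.im : ℂ) * (Complex.I * a) := by rw [hdecomp z, h]
      _ = a * ((z.re : ℂ) + (z.im : ℂ) * Complex.I) := by ring
      _ = a * z := by rw [Complex.re_add_im]
  · right
    intro z
    have hconj : (starRingEnd ℂ) z = (z.re : ℂ) - (z.im : ℂ) * Complex.I := by
      apply Complex.ext <;> simp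
    calc φ z = (z.re : ℂ) * a + (z.im : ℂ) * (-(Complex.I * a)) := by rw [hdecomp z, h]
      _ = a * ((z.re : ℂ) - (z.im : ℂ) * Complex.I) := by ring
      _ = a * (starRingEnd ℂ) z := by rw [hconj]
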